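/- Let G be a linearly ordered abelian group, define |z| = max(z, -z), and let D ⊆ G be a finite nonempty subset. If f : D → D satisfies |f(x) - f(y)| < |x - y| for all x ≠ y in D, then f has a unique fixed point. -/

import Mathlib

/-- A contractive self-map of a finite nonempty subset of a linearly ordered abelian
group has a unique fixed point. -/
theorem stmt_11 {G : Type*} [AddCommGroup G] [LinearOrder G] [IsOrderedAddMonoid G] (D : Finset G)
    (hD : D.Nonempty) (f : G → G) (hfD : ∀ x ∈ D, f x ∈ D)
    (hcontr : ∀ x ∈ D, ∀ y ∈ D, x ≠ y → max (f x - f y) (-(f x - f y)) < max (x - y) (-(x - y))) :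
    ∃! x, x ∈ D ∧ f x = x := by
  obtain ⟨x, hx, hmin⟩ := D.exists_min_image (fun x => max (f x - x) (-(f x - x))) hD
  have hfx : f x = x := by
    by_contra h
    have h1 := hcontr (f x) (hfD x hx) x hx h
    have h2 := hmin (f x) (hfD x hx)
    exact absurd (lt_of_le_of_lt h2 h1) (lt_irrefl _)
  refine ⟨x, ⟨hx, hfx⟩, ?_⟩
  rintro y ⟨hy, hfy⟩
  by_contra h
  have := hcontr y hy x hx h
  rw [hfy, hfx] at this
  exact absurd this (lt_irrefl _)
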